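/- arXiv:2408.04843 — 2 statements merged into one kernel-verified Lean document; each statement's English description precedes it below -/
import Mathlib

section
/- Every finite chordal graph is either complete or has a simplicial vertex, i.e., a vertex whose neighborhood is a clique. -/
/-- An induced (chordless) cycle of length `p` in a simple graph. -/
def SimpleGraph.IsInducedCycle {V : Type*} (G : SimpleGraph V) (p : ℕ) : Prop :=
  ∃ f : ZMod p → V, Function.Injective f ∧
    ∀ i j : ZMod p, G.Adj (f i) (f j) ↔ j = i + 1 ∨ i = j + 1

/-- A graph is chordal if it has no induced cycle of length at least 4. -/
def SimpleGraph.Chordal {V : Type*} (G : SimpleGraph V) : Prop :=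
  ∀ p : ℕ, 4 ≤ p → ¬ G.IsInducedCycle p

open SimpleGraph

namespace ChordalAux

variable {V : Type*}

/-- Reachability within a vertex set `t`. -/
def Reach (G : SimpleGraph V) (t : Set V) (x y : V) : Prop :=
  ∃ w : G.Walk x y, ∀ z ∈ w.support, z ∈ t

lemma Reach.mem_left {G : SimpleGraph V} {t : Set V} {x y : V} (h : Reach G t x y) : x ∈ t := by
  obtain ⟨w, hw⟩ := h; exact hw _ w.start_mem_support

lemma Reach.mem_right {G : SimpleGraph V} {t : Set V} {x y : V} (h : Reach G t x y) : y ∈ t := by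
  obtain ⟨w, hw⟩ := h; exact hw _ w.end_mem_support

lemma reach_refl {G : SimpleGraph V} {t : Set V} {x : V} (hx : x ∈ t) : Reach G t x x :=
  ⟨Walk.nil, by simpa using hx⟩

lemma Reach.symm {G : SimpleGraph V} {t : Set V} {x y : V} (h : Reach G t x y) :
    Reach G t y x := by
  obtain ⟨w, hw⟩ := h
  refine ⟨w.reverse, ?_⟩
  intro z hz
  rw [Walk.support_reverse] at hz
  exact hw z (List.mem_reverse.mp hz)

lemma Reach.trans {G : SimpleGraph V} {t : Set V} {x y z : V} (h1 : Reach G t x y)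
    (h2 : Reach G t y z) : Reach G t x z := by
  obtain ⟨w1, hw1⟩ := h1; obtain ⟨w2, hw2⟩ := h2
  refine ⟨w1.append w2, ?_⟩
  intro u hu
  rcases (Walk.mem_support_append_iff _ _).mp hu with h | h
  · exact hw1 u h
  · exact hw2 u h

lemma reach_adj {G : SimpleGraph V} {t : Set V} {x y : V} (h : G.Adj x y) (hx : x ∈ t)
    (hy : y ∈ t) : Reach G t x y := by
  refine ⟨Walk.cons h Walk.nil, ?_⟩
  intro z hz
  simp only [Walk.support_cons, Walk.support_nil, List.mem_cons,
    List.not_mem_nil, or_false] at hz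
  rcases hz with rfl | rfl
  · exact hx
  · exact hy

lemma Reach.mono {G : SimpleGraph V} {t t' : Set V} (hsub : t ⊆ t') {x y : V}
    (h : Reach G t x y) : Reach G t' x y := by
  obtain ⟨w, hw⟩ := h; exact ⟨w, fun z hz => hsub (hw z hz)⟩

lemma reach_reach {G : SimpleGraph V} {t : Set V} {a v : V} (h : Reach G t a v) :
    Reach G {z | Reach G t a z} a v := by
  classical
  obtain ⟨w, hw⟩ := h
  exact ⟨w, fun z hz => ⟨w.takeUntil z hz, fun u hu => hw u (w.support_takeUntil_subset hz hu)⟩⟩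

lemma exists_adj_reach {G : SimpleGraph V} {t : Set V} {a b x : V}
    (hnr : ¬ Reach G t a b) (w : G.Walk a b) (hw : ∀ z ∈ w.support, z ∈ insert x t)
    (hax : a ≠ x) : ∃ u, G.Adj x u ∧ Reach G t a u := by
  classical
  have hx : x ∈ w.support := by
    by_contra hx
    refine hnr ⟨w, fun z hz => ?_⟩
    rcases Set.mem_insert_iff.mp (hw z hz) with rfl | h
    · exact absurd hz hx
    · exact h
  set w1 := w.takeUntil x hx with hw1def
  have hcount : (w1.support).count x = 1 := w.count_support_takeUntil_eq_one hx
  obtain ⟨u, hadj, w3, hw3⟩ := Walk.exists_eq_cons_of_ne (Ne.symm hax) w1.reverse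
  have hxnot : x ∉ w3.support := by
    intro hxs
    have h2 : 2 ≤ (w1.reverse.support).count x := by
      rw [hw3, Walk.support_cons, List.count_cons_self]
      have : 0 < w3.support.count x := List.count_pos_iff.mpr hxs
      omega
    rw [Walk.support_reverse, List.count_reverse] at h2
    omega
  refine ⟨u, hadj, Reach.symm ⟨w3, ?_⟩⟩
  intro z hz
  have hzw : z ∈ w1.support := by
    have : z ∈ w1.reverse.support := by
      rw [hw3, Walk.support_cons]
      exact List.mem_cons_of_mem _ hz
    rwa [Walk.support_reverse, List.mem_reverse] at this
  rcases Set.mem_insert_iff.mp (hw z (w.support_takeUntil_subset hx hzw)) with rfl | h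
  · exact absurd hz hxnot
  · exact h

lemma getVert_mem_support {G : SimpleGraph V} {x y : V} (w : G.Walk x y) {i : ℕ}
    (hi : i ≤ w.length) : w.getVert i ∈ w.support :=
  Walk.mem_support_iff_exists_getVert.mpr ⟨i, rfl, hi⟩

lemma IsPath.getVert_inj {G : SimpleGraph V} {x y : V} (w : G.Walk x y) (hw : w.IsPath) :
    ∀ i ≤ w.length, ∀ j ≤ w.length, w.getVert i = w.getVert j → i = j := by
  induction w with
  | nil =>
    intro i hi j hj _
    simp only [Walk.length_nil, Nat.le_zero] at hi hj
    omega
  | @cons u v y h p ih =>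
    rw [Walk.cons_isPath_iff] at hw
    intro i hi j hj hij
    cases i with
    | zero =>
      cases j with
      | zero => rfl
      | succ j =>
        exfalso
        apply hw.2
        rw [Walk.getVert_zero, Walk.getVert_cons_succ] at hij
        rw [hij]
        exact getVert_mem_support p (by simpa using hj)
    | succ i =>
      cases j with
      | zero =>
        exfalso
        apply hw.2
        rw [Walk.getVert_zero, Walk.getVert_cons_succ] at hij
        rw [← hij]
        exact getVert_mem_support p (by simpa using hi)
      | succ j =>
        rw [Walk.getVert_cons_succ, Walk.getVert_cons_succ] at hij
        have := ih hw.1 i (by simpa using hi) j (by simpa using hj) hij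
        omega

lemma exists_walk_to_getVert {G : SimpleGraph V} {x y : V} (w : G.Walk x y) (i : ℕ) :
    ∃ w' : G.Walk x (w.getVert i), w'.length ≤ i ∧ ∀ z ∈ w'.support, z ∈ w.support := by
  induction w generalizing i with
  | nil =>
    refine ⟨Walk.nil.copy rfl ?_, ?_, ?_⟩
    · cases i <;> rfl
    · simp
    · simp
  | @cons u v y h p ih =>
    cases i with
    | zero =>
      refine ⟨Walk.nil.copy rfl (Walk.getVert_zero _).symm, by simp, by simp⟩
    | succ i =>
      obtain ⟨w', h1, h2⟩ := ih i
      refine ⟨(Walk.cons h w').copy rfl (Walk.getVert_cons_succ _ _).symm, ?_, ?_⟩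
      · rw [Walk.length_copy, Walk.length_cons]; omega
      · intro z hz
        rw [Walk.support_copy, Walk.support_cons] at hz
        rw [Walk.support_cons]
        rcases List.mem_cons.mp hz with rfl | hz
        · exact List.mem_cons_self
        · exact List.mem_cons_of_mem _ (h2 z hz)

lemma exists_walk_from_getVert {G : SimpleGraph V} {x y : V} (w : G.Walk x y) (i : ℕ)
    (hi : i ≤ w.length) :
    ∃ w' : G.Walk (w.getVert i) y, w'.length + i ≤ w.length ∧ ∀ z ∈ w'.support, z ∈ w.support := by
  induction w generalizing i with
  | nil =>
    have : i = 0 := by simpa using hi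
    subst this
    exact ⟨Walk.nil.copy (Walk.getVert_zero _).symm rfl, by simp, by simp⟩
  | @cons u v y h p ih =>
    cases i with
    | zero =>
      exact ⟨(Walk.cons h p).copy (Walk.getVert_zero _).symm rfl, by simp, by simp⟩
    | succ i =>
      obtain ⟨w', h1, h2⟩ := ih i (by simpa using hi)
      refine ⟨w'.copy (Walk.getVert_cons_succ _ _).symm rfl, ?_, ?_⟩
      · rw [Walk.length_copy, Walk.length_cons]; omega
      · intro z hz
        rw [Walk.support_copy] at hz
        rw [Walk.support_cons]
        exact List.mem_cons_of_mem _ (h2 z hz)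

lemma exists_shortest_walk {G : SimpleGraph V} {t : Set V} {x y : V} (h : Reach G t x y) :
    ∃ w : G.Walk x y, w.IsPath ∧ (∀ z ∈ w.support, z ∈ t) ∧
      ∀ w' : G.Walk x y, (∀ z ∈ w'.support, z ∈ t) → w.length ≤ w'.length := by
  classical
  obtain ⟨w0, hw0⟩ := h
  have hex : ∃ n, ∃ w : G.Walk x y, (∀ z ∈ w.support, z ∈ t) ∧ w.length = n :=
    ⟨w0.length, w0, hw0, rfl⟩
  obtain ⟨w, hw, hlen⟩ := Nat.find_spec hex
  refine ⟨w.bypass, w.bypass_isPath, fun z hz => hw z (w.support_bypass_subset hz), ?_⟩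
  intro w' hw'
  have h1 : w.bypass.length ≤ w.length := w.length_bypass_le
  have h2 : Nat.find hex ≤ w'.length := Nat.find_min' hex ⟨w', hw', rfl⟩
  omega

lemma shortest_not_adj {G : SimpleGraph V} {t : Set V} {x y : V} {w : G.Walk x y}
    (hsupp : ∀ z ∈ w.support, z ∈ t)
    (hmin : ∀ w' : G.Walk x y, (∀ z ∈ w'.support, z ∈ t) → w.length ≤ w'.length)
    {i j : ℕ} (hi : i ≤ w.length) (hj : j ≤ w.length) (hij : i + 1 < j) :
    ¬ G.Adj (w.getVert i) (w.getVert j) := by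
  intro hadj
  obtain ⟨w1, hl1, hs1⟩ := exists_walk_to_getVert w i
  obtain ⟨w2, hl2, hs2⟩ := exists_walk_from_getVert w j hj
  have hle := hmin (w1.append (Walk.cons hadj w2)) ?_
  · rw [Walk.length_append, Walk.length_cons] at hle
    omega
  · intro z hz
    rcases (Walk.mem_support_append_iff _ _).mp hz with hmem | hmem
    · exact hsupp z (hs1 z hmem)
    · rw [Walk.support_cons] at hmem
      rcases List.mem_cons.mp hmem with rfl | hmem
      · exact hsupp _ (getVert_mem_support w hi)
      · exact hsupp z (hs2 z hmem)

lemma shortest_adj_iff {G : SimpleGraph V} {t : Set V} {x y : V} {w : G.Walk x y}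
    (hsupp : ∀ z ∈ w.support, z ∈ t)
    (hmin : ∀ w' : G.Walk x y, (∀ z ∈ w'.support, z ∈ t) → w.length ≤ w'.length)
    {i j : ℕ} (hi : i ≤ w.length) (hj : j ≤ w.length) :
    G.Adj (w.getVert i) (w.getVert j) ↔ (j = i + 1 ∨ i = j + 1) := by
  constructor
  · intro hadj
    by_contra hcon
    push_neg at hcon
    have hne : i ≠ j := fun hh => G.irrefl (hh ▸ hadj)
    rcases Nat.lt_or_ge i j with hlt | hge
    · exact shortest_not_adj hsupp hmin hi hj (by omega) hadj
    · exact shortest_not_adj hsupp hmin hj hi (by omega) hadj.symm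
  · rintro (rfl | rfl)
    · exact w.adj_getVert_succ (by omega)
    · exact (w.adj_getVert_succ (by omega)).symm


lemma isInducedCycle_of_two_paths {V : Type*} (G : SimpleGraph V) {k m : ℕ}
    (hk : 2 ≤ k) (hm : 2 ≤ m) (p q : ℕ → V)
    (hpq0 : p 0 = q 0) (hpqk : p k = q m)
    (hpinj : ∀ i ≤ k, ∀ j ≤ k, p i = p j → i = j)
    (hqinj : ∀ i ≤ m, ∀ j ≤ m, q i = q j → i = j)
    (hne : ∀ i j, 0 < i → i < k → 0 < j → j < m → p i ≠ q j)
    (hpind : ∀ i ≤ k, ∀ j ≤ k, (G.Adj (p i) (p j) ↔ (j = i + 1 ∨ i = j + 1)))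
    (hqind : ∀ i ≤ m, ∀ j ≤ m, (G.Adj (q i) (q j) ↔ (j = i + 1 ∨ i = j + 1)))
    (hcross : ∀ i j, 0 < i → i < k → 0 < j → j < m → ¬ G.Adj (p i) (q j)) :
    G.IsInducedCycle (k + m) := by
  set n := k + m with hn
  haveI : NeZero n := ⟨by omega⟩
  set g : ℕ → V := fun a => if a ≤ k then p a else q (n - a) with hg
  have hga : ∀ a, a ≤ k → g a = p a := fun a ha => if_pos ha
  have hgb : ∀ a, k < a → g a = q (n - a) := fun a ha => if_neg (by omega)
  have ginj : ∀ a, a < n → ∀ b, b < n → g a = g b → a = b := by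
    have mixed : ∀ a, a ≤ k → ∀ b, k < b → b < n → g a = g b → a = b := by
      intro a ha b hb hbn hab
      rw [hga a ha, hgb b hb] at hab
      exfalso
      have hj1 : 0 < n - b := by omega
      have hj2 : n - b < m := by omega
      rcases Nat.eq_zero_or_pos a with rfl | ha0
      · have := hqinj 0 (by omega) (n - b) (by omega) (hpq0.symm.trans hab)
        omega
      rcases eq_or_lt_of_le ha with rfl | hak
      · have := hqinj m le_rfl (n - b) (by omega) (hpqk.symm.trans hab)
        omega
      · exact hne a (n - b) ha0 hak hj1 hj2 hab
    intro a ha b hb hab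
    rcases le_or_gt a k with h1 | h1 <;> rcases le_or_gt b k with h2 | h2
    · rw [hga a h1, hga b h2] at hab
      exact hpinj a h1 b h2 hab
    · exact mixed a h1 b h2 hb hab
    · exact (mixed b h2 a h1 ha hab.symm).symm
    · rw [hgb a h1, hgb b h2] at hab
      have := hqinj (n - a) (by omega) (n - b) (by omega) hab
      omega
  have gadj : ∀ a, a < n → ∀ b, b < n →
      (G.Adj (g a) (g b) ↔ (b = (a + 1) % n ∨ a = (b + 1) % n)) := by
    have mixed : ∀ a, a ≤ k → ∀ b, k < b → b < n →
        (G.Adj (g a) (g b) ↔ (b = (a + 1) % n ∨ a = (b + 1) % n)) := by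
      intro a ha b hb hbn
      have hj1 : 0 < n - b := by omega
      have hj2 : n - b < m := by omega
      rw [hga a ha, hgb b hb]
      have e1 : (a + 1) % n = a + 1 := Nat.mod_eq_of_lt (by omega)
      rw [e1]
      have e2 : ((b + 1) % n = 0 ∧ b + 1 = n) ∨ ((b + 1) % n = b + 1 ∧ b + 1 < n) := by
        rcases eq_or_lt_of_le (show b + 1 ≤ n from hbn) with hb1 | hb1
        · exact Or.inl ⟨by rw [hb1, Nat.mod_self], hb1⟩
        · exact Or.inr ⟨Nat.mod_eq_of_lt hb1, hb1⟩
      rcases Nat.eq_zero_or_pos a with rfl | ha0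
      · rw [hpq0, hqind 0 (by omega) (n - b) (by omega)]
        rcases e2 with ⟨h, h'⟩ | ⟨h, h'⟩ <;> rw [h] <;> omega
      rcases eq_or_lt_of_le ha with rfl | hak
      · rw [hpqk, hqind m le_rfl (n - b) (by omega)]
        rcases e2 with ⟨h, h'⟩ | ⟨h, h'⟩ <;> rw [h] <;> omega
      · have hnadj := hcross a (n - b) ha0 hak hj1 hj2
        refine iff_of_false hnadj ?_
        rcases e2 with ⟨h, h'⟩ | ⟨h, h'⟩ <;> rw [h] <;> omega
    intro a ha b hb
    rcases le_or_gt a k with h1 | h1 <;> rcases le_or_gt b k with h2 | h2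
    · rw [hga a h1, hga b h2, hpind a h1 b h2,
        Nat.mod_eq_of_lt (show a + 1 < n by omega), Nat.mod_eq_of_lt (show b + 1 < n by omega)]
    · exact mixed a h1 b h2 hb
    · rw [G.adj_comm, or_comm]
      exact mixed b h2 a h1 ha
    · rw [hgb a h1, hgb b h2, hqind (n - a) (by omega) (n - b) (by omega)]
      have ea : (a + 1) % n = 0 ∧ a + 1 = n ∨ ((a + 1) % n = a + 1 ∧ a + 1 < n) := by
        rcases eq_or_lt_of_le (show a + 1 ≤ n from ha) with h | h
        · exact Or.inl ⟨by rw [h, Nat.mod_self], h⟩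
        · exact Or.inr ⟨Nat.mod_eq_of_lt h, h⟩
      have eb : (b + 1) % n = 0 ∧ b + 1 = n ∨ ((b + 1) % n = b + 1 ∧ b + 1 < n) := by
        rcases eq_or_lt_of_le (show b + 1 ≤ n from hb) with h | h
        · exact Or.inl ⟨by rw [h, Nat.mod_self], h⟩
        · exact Or.inr ⟨Nat.mod_eq_of_lt h, h⟩
      rcases ea with ⟨h, h'⟩ | ⟨h, h'⟩ <;> rcases eb with ⟨hh, hh'⟩ | ⟨hh, hh'⟩ <;>
        rw [h, hh] <;> omega
  have hval : ∀ i j : ZMod n, j = i + 1 ↔ j.val = (i.val + 1) % n := by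
    intro i j
    have hinj : ∀ u v : ZMod n, u = v ↔ u.val = v.val :=
      fun u v => ⟨fun h => h ▸ rfl, fun h => ZMod.val_injective n h⟩
    rw [hinj j (i + 1), ZMod.val_add, ZMod.val_one'' (show n ≠ 1 by omega)]
  refine ⟨fun i => g i.val, ?_, ?_⟩
  · intro i j hij
    exact ZMod.val_injective n (ginj _ (ZMod.val_lt i) _ (ZMod.val_lt j) hij)
  · intro i j
    rw [gadj _ (ZMod.val_lt i) _ (ZMod.val_lt j), hval i j, hval j i]


/-- `v` is simplicial within `s`. -/
def SimplIn {V : Type*} (G : SimpleGraph V) (s : Finset V) (v : V) : Prop :=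
  ∀ x ∈ s, ∀ y ∈ s, G.Adj v x → G.Adj v y → x ≠ y → G.Adj x y

lemma side {V : Type*} {G : SimpleGraph V} {s S : Finset V} {a b : V}
    (IH : ∀ t : Finset V, t.card < s.card → t.Nonempty →
      (∀ u ∈ t, ∀ v ∈ t, u ≠ v → G.Adj u v) ∨
      ∃ c ∈ t, ∃ d ∈ t, c ≠ d ∧ ¬ G.Adj c d ∧ SimplIn G t c ∧ SimplIn G t d)
    (hSs : S ⊆ s) (ha : a ∈ s) (haS : a ∉ S) (hb : b ∈ s) (hbS : b ∉ S)
    (hsep : ¬ Reach G (↑s \ ↑S) a b)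
    (hclique : ∀ x ∈ S, ∀ y ∈ S, x ≠ y → G.Adj x y) :
    ∃ v, Reach G (↑s \ ↑S) a v ∧ SimplIn G s v := by
  classical
  set t : Set V := ↑s \ ↑S with ht
  have hat : a ∈ t := by simp [ht, ha, haS]
  set s₁ : Finset V := (s.filter (fun v => Reach G t a v)) ∪ S with hs₁
  have hs₁s : s₁ ⊆ s := by
    intro z hz
    rcases Finset.mem_union.mp hz with h | h
    · exact (Finset.mem_filter.mp h).1
    · exact hSs h
  have hmemA : ∀ v, Reach G t a v → v ∈ s₁ := by
    intro v hv
    have hvt : v ∈ t := hv.mem_right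
    refine Finset.mem_union.mpr (Or.inl (Finset.mem_filter.mpr ⟨?_, hv⟩))
    rw [ht] at hvt
    exact hvt.1
  have hba : b ∉ s₁ := by
    intro hbin
    rcases Finset.mem_union.mp hbin with h | h
    · exact hsep (Finset.mem_filter.mp h).2
    · exact hbS h
  have hcard : s₁.card < s.card :=
    Finset.card_lt_card ⟨hs₁s, fun hcon => hba (hcon hb)⟩
  have hclosed : ∀ v, Reach G t a v → ∀ u ∈ s, G.Adj v u → u ∈ s₁ := by
    intro v hv u hu hadj
    by_cases huS : u ∈ S
    · exact Finset.mem_union.mpr (Or.inr huS)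
    · refine hmemA u (hv.trans (reach_adj hadj hv.mem_right ?_))
      rw [ht]
      exact ⟨hu, huS⟩
  have hlift : ∀ v, Reach G t a v → SimplIn G s₁ v → SimplIn G s v := by
    intro v hv hsimp x hx y hy hvx hvy hxy
    exact hsimp x (hclosed v hv x hx hvx) y (hclosed v hv y hy hvy) hvx hvy hxy
  have has₁ : a ∈ s₁ := hmemA a (reach_refl hat)
  rcases IH s₁ hcard ⟨a, has₁⟩ with hcomp | ⟨c, hc, d, hd, hcd, hncd, hsc, hsd⟩
  · refine ⟨a, reach_refl hat, hlift a (reach_refl hat) ?_⟩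
    intro x hx y hy _ _ hxy
    exact hcomp x hx y hy hxy
  · have hone : Reach G t a c ∨ Reach G t a d := by
      by_contra hcon
      push_neg at hcon
      have hcS : c ∈ S := by
        rcases Finset.mem_union.mp hc with h | h
        · exact absurd (Finset.mem_filter.mp h).2 hcon.1
        · exact h
      have hdS : d ∈ S := by
        rcases Finset.mem_union.mp hd with h | h
        · exact absurd (Finset.mem_filter.mp h).2 hcon.2
        · exact h
      exact hncd (hclique c hcS d hdS hcd)
    rcases hone with h | h
    · exact ⟨c, h, hlift c h hsc⟩
    · exact ⟨d, h, hlift d h hsd⟩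

lemma main {V : Type*} [Fintype V] (G : SimpleGraph V) (hG : G.Chordal) :
    ∀ n (s : Finset V), s.card ≤ n → s.Nonempty →
      (∀ u ∈ s, ∀ v ∈ s, u ≠ v → G.Adj u v) ∨
      ∃ c ∈ s, ∃ d ∈ s, c ≠ d ∧ ¬ G.Adj c d ∧ SimplIn G s c ∧ SimplIn G s d := by
  intro n
  induction n with
  | zero =>
    intro s hcard hne
    rw [Nat.le_zero, Finset.card_eq_zero] at hcard
    subst hcard
    exact absurd hne (by simp)
  | succ n IH =>
    intro s hcard hne
    by_cases hcomp : ∀ u ∈ s, ∀ v ∈ s, u ≠ v → G.Adj u v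
    · exact Or.inl hcomp
    push_neg at hcomp
    obtain ⟨a, ha, b, hb, hab, hnab⟩ := hcomp
    classical
    -- a separator exists
    have hsep0 : ∃ S : Finset V, ((S ⊆ s ∧ a ∉ S ∧ b ∉ S) ∧ ¬ Reach G (↑s \ ↑S) a b) := by
      refine ⟨(s.erase a).erase b, ⟨?_, ?_, ?_⟩, ?_⟩
      · exact (Finset.erase_subset _ _).trans (Finset.erase_subset _ _)
      · simp [Finset.mem_erase]
      · simp [Finset.mem_erase]
      · rintro ⟨w, hw⟩
        obtain ⟨c, hadj, w', hw'⟩ := Walk.exists_eq_cons_of_ne hab w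
        have hcsupp : c ∈ w.support := by
          rw [hw', Walk.support_cons]
          exact List.mem_cons_of_mem _ w'.start_mem_support
        have := hw c hcsupp
        simp only [Set.mem_diff, Finset.coe_erase, Set.mem_diff, Finset.mem_coe,
          Set.mem_singleton_iff] at this
        have hcab : c = a ∨ c = b := by
          rcases this with ⟨hcs, hcnot⟩
          by_contra hcon
          push_neg at hcon
          exact hcnot (by simp [Finset.mem_erase, hcon.1, hcon.2, hcs])
        rcases hcab with rfl | rfl
        · exact G.irrefl hadj
        · exact hnab hadj
    have hex : ∃ kk, ∃ S : Finset V,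
        (((S ⊆ s ∧ a ∉ S ∧ b ∉ S) ∧ ¬ Reach G (↑s \ ↑S) a b) ∧ S.card = kk) := by
      obtain ⟨S, hS⟩ := hsep0
      exact ⟨S.card, S, hS, rfl⟩
    obtain ⟨S, ⟨⟨hSs, haS, hbS⟩, hsepS⟩, hScard⟩ := Nat.find_spec hex
    have hmin : ∀ S' : Finset V, S' ⊆ s → a ∉ S' → b ∉ S' → S'.card < S.card →
        Reach G (↑s \ ↑S') a b := by
      intro S' h1 h2 h3 hlt
      by_contra hcon
      have := Nat.find_min' hex ⟨S', ⟨⟨h1, h2, h3⟩, hcon⟩, rfl⟩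
      omega
    -- every separator vertex has a neighbour in each side
    have hnbr : ∀ x ∈ S, (∃ u, G.Adj x u ∧ Reach G (↑s \ ↑S) a u) ∧
        (∃ u, G.Adj x u ∧ Reach G (↑s \ ↑S) b u) := by
      intro x hxS
      obtain ⟨w, hw⟩ := hmin (S.erase x) ((Finset.erase_subset _ _).trans hSs)
        (fun h => haS (Finset.mem_of_mem_erase h)) (fun h => hbS (Finset.mem_of_mem_erase h))
        (Finset.card_erase_lt_of_mem hxS)
      have hw' : ∀ z ∈ w.support, z ∈ insert x ((↑s \ ↑S) : Set V) := by
        intro z hz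
        have hmem := hw z hz
        simp only [Set.mem_diff, Finset.coe_erase, Finset.mem_coe, Set.mem_singleton_iff,
          Set.mem_insert_iff] at hmem ⊢
        by_cases hzx : z = x
        · exact Or.inl hzx
        · right
          exact ⟨hmem.1, fun hzS => hmem.2 ⟨hzS, hzx⟩⟩
      have hax : a ≠ x := fun h => haS (h ▸ hxS)
      have hbx : b ≠ x := fun h => hbS (h ▸ hxS)
      have hw'' : ∀ z ∈ w.reverse.support, z ∈ insert x ((↑s \ ↑S) : Set V) := by
        intro z hz
        rw [Walk.support_reverse] at hz
        exact hw' z (List.mem_reverse.mp hz)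
      exact ⟨exists_adj_reach hsepS w hw' hax,
        exists_adj_reach (fun h => hsepS h.symm) w.reverse hw'' hbx⟩
    -- the separator is a clique (uses chordality)
    have hclique : ∀ x ∈ S, ∀ y ∈ S, x ≠ y → G.Adj x y := by
      intro x hxS y hyS hxy
      by_contra hnxy
      set t : Set V := ↑s \ ↑S with ht
      have hABdisj : ∀ v, Reach G t a v → Reach G t b v → False :=
        fun v hva hvb => hsepS (hva.trans hvb.symm)
      have hABadj : ∀ u v, Reach G t a u → Reach G t b v → ¬ G.Adj u v := by
        intro u v hu hv hadj
        exact hsepS ((hu.trans (reach_adj hadj hu.mem_right hv.mem_right)).trans hv.symm)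
      obtain ⟨⟨uxA, hadjxA, hxA⟩, ⟨uxB, hadjxB, hxB⟩⟩ := hnbr x hxS
      obtain ⟨⟨uyA, hadjyA, hyA⟩, ⟨uyB, hadjyB, hyB⟩⟩ := hnbr y hyS
      set A : Set V := {z | Reach G t a z} with hA
      set B : Set V := {z | Reach G t b z} with hB
      set TA : Set V := insert x (insert y A) with hTA
      set TB : Set V := insert x (insert y B) with hTB
      have hreachTA : Reach G TA x y := by
        have h1 : Reach G A a uxA := reach_reach hxA
        have h2 : Reach G A a uyA := reach_reach hyA
        have hsub : A ⊆ TA := fun z hz => Set.mem_insert_iff.mpr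
          (Or.inr (Set.mem_insert_iff.mpr (Or.inr hz)))
        refine (reach_adj hadjxA (Set.mem_insert _ _) (hsub h1.mem_right)).trans
          (((h1.symm.trans h2).mono hsub).trans
            (reach_adj hadjyA.symm (hsub h2.mem_right) ?_))
        exact Set.mem_insert_iff.mpr (Or.inr (Set.mem_insert _ _))
      have hreachTB : Reach G TB x y := by
        have h1 : Reach G B b uxB := reach_reach hxB
        have h2 : Reach G B b uyB := reach_reach hyB
        have hsub : B ⊆ TB := fun z hz => Set.mem_insert_iff.mpr
          (Or.inr (Set.mem_insert_iff.mpr (Or.inr hz)))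
        refine (reach_adj hadjxB (Set.mem_insert _ _) (hsub h1.mem_right)).trans
          (((h1.symm.trans h2).mono hsub).trans
            (reach_adj hadjyB.symm (hsub h2.mem_right) ?_))
        exact Set.mem_insert_iff.mpr (Or.inr (Set.mem_insert _ _))
      obtain ⟨P, hPpath, hPsupp, hPmin⟩ := exists_shortest_walk hreachTA
      obtain ⟨Q, hQpath, hQsupp, hQmin⟩ := exists_shortest_walk hreachTB
      set k := P.length with hkdef
      set m := Q.length with hmdef
      have hk : 2 ≤ k := by
        rcases Nat.lt_or_ge k 2 with hlt | hge
        · exfalso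
          interval_cases k
          · exact hxy (Walk.eq_of_length_eq_zero hkdef.symm)
          · have h01 := P.adj_getVert_succ (i := 0) (by omega)
            rw [Walk.getVert_zero] at h01
            have : P.getVert 1 = y := by
              have := P.getVert_length
              rwa [← hkdef] at this
            rw [this] at h01
            exact hnxy h01
        · exact hge
      have hm : 2 ≤ m := by
        rcases Nat.lt_or_ge m 2 with hlt | hge
        · exfalso
          interval_cases m
          · exact hxy (Walk.eq_of_length_eq_zero hmdef.symm)
          · have h01 := Q.adj_getVert_succ (i := 0) (by omega)
            rw [Walk.getVert_zero] at h01
            have : Q.getVert 1 = y := by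
              have := Q.getVert_length
              rwa [← hmdef] at this
            rw [this] at h01
            exact hnxy h01
        · exact hge
      have hPinj : ∀ i ≤ k, ∀ j ≤ k, P.getVert i = P.getVert j → i = j :=
        IsPath.getVert_inj P hPpath
      have hQinj : ∀ i ≤ m, ∀ j ≤ m, Q.getVert i = Q.getVert j → i = j :=
        IsPath.getVert_inj Q hQpath
      have hPint : ∀ i, 0 < i → i < k → P.getVert i ∈ A := by
        intro i h0 hik
        have hmem := hPsupp _ (getVert_mem_support P (le_of_lt hik))
        rcases Set.mem_insert_iff.mp hmem with hcon | hmem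
        · exfalso
          have := hPinj i (by omega) 0 (by omega)
            (by rw [Walk.getVert_zero]; exact hcon)
          omega
        rcases Set.mem_insert_iff.mp hmem with hcon | hmem
        · exfalso
          have := hPinj i (by omega) k le_rfl
            (by rw [hkdef, Walk.getVert_length]; exact hcon)
          omega
        · exact hmem
      have hQint : ∀ i, 0 < i → i < m → Q.getVert i ∈ B := by
        intro i h0 hik
        have hmem := hQsupp _ (getVert_mem_support Q (le_of_lt hik))
        rcases Set.mem_insert_iff.mp hmem with hcon | hmem
        · exfalso
          have := hQinj i (by omega) 0 (by omega)
            (by rw [Walk.getVert_zero]; exact hcon)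
          omega
        rcases Set.mem_insert_iff.mp hmem with hcon | hmem
        · exfalso
          have := hQinj i (by omega) m le_rfl
            (by rw [hmdef, Walk.getVert_length]; exact hcon)
          omega
        · exact hmem
      refine hG (k + m) (by omega)
        (isInducedCycle_of_two_paths G hk hm P.getVert Q.getVert ?_ ?_ hPinj hQinj ?_ ?_ ?_ ?_)
      · rw [Walk.getVert_zero, Walk.getVert_zero]
      · rw [hkdef, hmdef, Walk.getVert_length, Walk.getVert_length]
      · intro i j hi0 hik hj0 hjm heq
        exact hABdisj _ (hPint i hi0 hik) (heq ▸ hQint j hj0 hjm)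
      · intro i hi j hj
        exact shortest_adj_iff hPsupp hPmin hi hj
      · intro i hi j hj
        exact shortest_adj_iff hQsupp hQmin hi hj
      · intro i j hi0 hik hj0 hjm
        exact hABadj _ _ (hPint i hi0 hik) (hQint j hj0 hjm)
    -- apply the side lemma on both sides
    have IH' : ∀ t : Finset V, t.card < s.card → t.Nonempty →
        (∀ u ∈ t, ∀ v ∈ t, u ≠ v → G.Adj u v) ∨
        ∃ c ∈ t, ∃ d ∈ t, c ≠ d ∧ ¬ G.Adj c d ∧ SimplIn G t c ∧ SimplIn G t d :=
      fun t h1 h2 => IH t (by omega) h2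
    obtain ⟨vA, hvA, hvAs⟩ := side IH' hSs ha haS hb hbS hsepS hclique
    obtain ⟨vB, hvB, hvBs⟩ := side IH' hSs hb hbS ha haS (fun h => hsepS h.symm) hclique
    refine Or.inr ⟨vA, hvA.mem_right.1, vB, hvB.mem_right.1, ?_, ?_, hvAs, hvBs⟩
    · intro h
      exact hsepS (hvA.trans (h ▸ hvB).symm)
    · intro hadj
      exact hsepS ((hvA.trans (reach_adj hadj hvA.mem_right hvB.mem_right)).trans hvB.symm)

end ChordalAux

/-- Every finite chordal graph is either complete or has a simplicial vertex,
i.e. a vertex whose neighbourhood is a clique. -/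
theorem chordal_complete_or_simplicial_vertex {V : Type*} [Fintype V] [Nonempty V]
    (G : SimpleGraph V) (h : G.Chordal) :
    (∀ u v : V, u ≠ v → G.Adj u v) ∨ ∃ v : V, G.IsClique (G.neighborSet v) := by
  classical
  rcases ChordalAux.main G h Finset.univ.card Finset.univ le_rfl Finset.univ_nonempty with
    hcomp | ⟨c, _, d, _, _, _, hsc, _⟩
  · exact Or.inl fun u v huv => hcomp u (Finset.mem_univ u) v (Finset.mem_univ v) huv
  · refine Or.inr ⟨c, ?_⟩
    intro u hu v hv huv
    exact hsc u (Finset.mem_univ u) v (Finset.mem_univ v) hu hv huv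
end

section
/- Every finite chordal graph admits a perfect elimination ordering of its vertices. -/
namespace PEO
open SimpleGraph

variable {V : Type*} {G : SimpleGraph V}

/-- The walk consisting of the first `n` darts of `p`. -/
def wtake {u v : V} : (p : G.Walk u v) → (n : ℕ) → G.Walk u (p.getVert n)
  | .nil, _ => .nil
  | .cons h q, 0 => Walk.nil.copy rfl ((Walk.cons h q).getVert_zero).symm
  | .cons h q, (n + 1) => (Walk.cons h (wtake q n)).copy rfl (Walk.getVert_cons_succ _ h).symm

lemma length_wtake {u v : V} (p : G.Walk u v) (n : ℕ) (hn : n ≤ p.length) :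
    (wtake p n).length = n := by
  induction p generalizing n with
  | nil => simp at hn; simp [hn, wtake]
  | cons h q ih =>
    cases n with
    | zero => simp [wtake]
    | succ n => simp only [wtake, Walk.length_copy, Walk.length_cons]
                rw [ih n (by simpa using hn)]

lemma support_wtake_subset {u v : V} (p : G.Walk u v) (n : ℕ) :
    ∀ x ∈ (wtake p n).support, x ∈ p.support := by
  induction p generalizing n with
  | nil => simp [wtake]
  | cons h q ih =>
    cases n with
    | zero => simp [wtake]
    | succ n =>
      intro x hx
      simp only [wtake, Walk.support_copy, Walk.support_cons, List.mem_cons] at hx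
      rcases hx with rfl | hx
      · simp
      · simp [ih n x hx]

lemma length_wdrop {u v : V} (p : G.Walk u v) (n : ℕ) :
    (p.drop n).length = p.length - n := by
  induction p generalizing n with
  | nil => simp [Walk.drop]
  | cons h q ih =>
    cases n with
    | zero => simp [Walk.drop]
    | succ n => simp [Walk.drop, ih n]

lemma support_wdrop_subset {u v : V} (p : G.Walk u v) (n : ℕ) :
    ∀ x ∈ (p.drop n).support, x ∈ p.support := by
  induction p generalizing n with
  | nil => simp [Walk.drop, Walk.getVert_of_length_le]
  | cons h q ih =>
    cases n with
    | zero => simp [Walk.drop]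
    | succ n =>
      intro x hx
      simp only [Walk.drop, Walk.support_copy] at hx
      simp [ih n x hx]

end PEO

namespace PEO2
open SimpleGraph
variable {V : Type*} {G : SimpleGraph V}

lemma exists_min_walk {s t : V} (P : Set V)
    (h : ∃ w : G.Walk s t, ∀ x ∈ w.support, x ∈ P) :
    ∃ w : G.Walk s t, (∀ x ∈ w.support, x ∈ P) ∧
      (∀ i j, i < j → j ≤ w.length → w.getVert i ≠ w.getVert j) ∧
      (∀ i j, i + 1 < j → j ≤ w.length → ¬ G.Adj (w.getVert i) (w.getVert j)) := by
  classical
  set L : Set ℕ := {l | ∃ w : G.Walk s t, (∀ x ∈ w.support, x ∈ P) ∧ w.length = l} with hL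
  have hLne : L.Nonempty := by obtain ⟨w, hw⟩ := h; exact ⟨w.length, w, hw, rfl⟩
  obtain ⟨w, hw, hwlen⟩ := Nat.sInf_mem hLne
  have hmin : ∀ w' : G.Walk s t, (∀ x ∈ w'.support, x ∈ P) → w.length ≤ w'.length := by
    intro w' hw'
    rw [hwlen]
    exact Nat.sInf_le ⟨w', hw', rfl⟩
  refine ⟨w, hw, ?_, ?_⟩
  · intro i j hij hjle heq
    set w' : G.Walk s t := (PEO.wtake w i).append ((w.drop j).copy heq.symm rfl) with hw'
    have hsup : ∀ x ∈ w'.support, x ∈ P := by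
      intro x hx
      rw [Walk.mem_support_append_iff] at hx
      rcases hx with hx | hx
      · exact hw x (PEO.support_wtake_subset w i x hx)
      · rw [Walk.support_copy] at hx
        exact hw x (PEO.support_wdrop_subset w j x hx)
    have hlen : w'.length = i + (w.length - j) := by
      rw [hw', Walk.length_append, Walk.length_copy, PEO.length_wtake w i (by omega),
        PEO.length_wdrop]
    have := hmin w' hsup
    omega
  · intro i j hij hjle hadj
    set w' : G.Walk s t := (PEO.wtake w i).append (Walk.cons hadj (w.drop j)) with hw'
    have hsup : ∀ x ∈ w'.support, x ∈ P := by
      intro x hx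
      rw [Walk.mem_support_append_iff] at hx
      rcases hx with hx | hx
      · exact hw x (PEO.support_wtake_subset w i x hx)
      · rw [Walk.support_cons, List.mem_cons] at hx
        rcases hx with rfl | hx
        · exact hw _ (Walk.mem_support_iff_exists_getVert.2 ⟨i, rfl, by omega⟩)
        · exact hw x (PEO.support_wdrop_subset w j x hx)
    have hlen : w'.length = i + 1 + (w.length - j) := by
      rw [hw', Walk.length_append, Walk.length_cons, PEO.length_wtake w i (by omega),
        PEO.length_wdrop]
      omega
    have := hmin w' hsup
    omega

end PEO2


namespace PEO2
open SimpleGraph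
variable {V : Type*} {G : SimpleGraph V}

lemma cycle_of_two_paths {s t : V} {m n : ℕ} (hna : ¬ G.Adj s t)
    (P Q : G.Walk s t) (hm0 : P.length = m) (hn0 : Q.length = n)
    (hm : 2 ≤ m) (hn : 2 ≤ n)
    (Pinj : ∀ i j, i < j → j ≤ m → P.getVert i ≠ P.getVert j)
    (Pchord : ∀ i j, i + 1 < j → j ≤ m → ¬ G.Adj (P.getVert i) (P.getVert j))
    (Qinj : ∀ i j, i < j → j ≤ n → Q.getVert i ≠ Q.getVert j)
    (Qchord : ∀ i j, i + 1 < j → j ≤ n → ¬ G.Adj (Q.getVert i) (Q.getVert j))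
    (hdisj : ∀ i j, 0 < i → i < m → 0 < j → j < n →
      P.getVert i ≠ Q.getVert j)
    (hnoedge : ∀ i j, 0 < i → i < m → 0 < j → j < n →
      ¬ G.Adj (P.getVert i) (Q.getVert j)) :
    G.IsInducedCycle (m + n) := by
  set p := m + n with hp'
  have hp4 : 4 ≤ p := by omega
  haveI : NeZero p := ⟨by omega⟩
  haveI : Fact (1 < p) := ⟨by omega⟩
  set g : ℕ → V := fun k => if k ≤ m then P.getVert k else Q.getVert (p - k) with hg
  have hPm : P.getVert m = t := by rw [← hm0]; exact P.getVert_length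
  have hQn : Q.getVert n = t := by rw [← hn0]; exact Q.getVert_length
  have hP0 : P.getVert 0 = s := P.getVert_zero
  have hQ0 : Q.getVert 0 = s := Q.getVert_zero
  have hgP : ∀ a, a ≤ m → g a = P.getVert a := by intro a ha; simp [hg, ha]
  have hgQ : ∀ a, m < a → g a = Q.getVert (p - a) := by
    intro a ha; simp [hg, Nat.not_le.mpr ha]
  have hPadj : ∀ i, i < m → G.Adj (P.getVert i) (P.getVert (i + 1)) := by
    intro i hi; exact P.adj_getVert_succ (by omega)
  have hQadj : ∀ i, i < n → G.Adj (Q.getVert i) (Q.getVert (i + 1)) := by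
    intro i hi; exact Q.adj_getVert_succ (by omega)
  -- injectivity on [0, p)
  have Ginj : ∀ a b, a < b → b < p → g a ≠ g b := by
    intro a b hab hbp
    rcases le_or_gt b m with hbm | hbm
    · rw [hgP a (by omega), hgP b hbm]
      exact Pinj a b hab hbm
    · rcases le_or_gt a m with ham | ham
      · rw [hgP a ham, hgQ b hbm]
        have h1 : 0 < p - b := by omega
        have h2 : p - b < n := by omega
        rcases Nat.eq_zero_or_pos a with rfl | hapos
        · rw [hP0]
          exact fun hcon => Qinj 0 (p - b) h1 (by omega) (hQ0.trans hcon)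
        · rcases eq_or_lt_of_le ham with heq | ham'
          · subst heq
            rw [hPm]
            intro hcon
            exact Qinj (p - b) n h2 le_rfl (hQn.trans hcon).symm
          · exact hdisj a (p - b) hapos ham' h1 h2
      · rw [hgQ a ham, hgQ b hbm]
        intro hcon
        exact Qinj (p - b) (p - a) (by omega) (by omega) hcon.symm
  -- adjacency helper for a < b
  have Ghelp : ∀ a b, a < b → b < p →
      (G.Adj (g a) (g b) ↔ (b = a + 1 ∨ (a = 0 ∧ b = p - 1))) := by
    intro a b hab hbp
    rcases le_or_gt b m with hbm | hbm
    · rw [hgP a (by omega), hgP b hbm]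
      constructor
      · intro hadj
        by_contra hcon
        push_neg at hcon
        rcases Nat.lt_or_ge (a + 1) b with h | h
        · exact Pchord a b h hbm hadj
        · omega
      · rintro (rfl | ⟨rfl, hb1⟩)
        · exact hPadj a (by omega)
        · exfalso; omega
    · rcases le_or_gt a m with ham | ham
      · rw [hgP a ham, hgQ b hbm]
        have h1 : 0 < p - b := by omega
        have h2 : p - b < n := by omega
        rcases Nat.eq_zero_or_pos a with rfl | hapos
        · rw [hP0]
          have key : G.Adj s (Q.getVert (p - b)) ↔ p - b = 1 := by
            constructor
            · intro hadj
              by_contra hcon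
              exact Qchord 0 (p - b) (by omega) (by omega) (by rw [hQ0]; exact hadj)
            · intro h3
              rw [h3]
              have := hQadj 0 (by omega)
              rwa [hQ0] at this
          rw [key]
          omega
        · rcases eq_or_lt_of_le ham with heq | ham'
          · subst heq
            rw [hPm]
            have key : G.Adj t (Q.getVert (p - b)) ↔ p - b = n - 1 := by
              constructor
              · intro hadj
                by_contra hcon
                exact Qchord (p - b) n (by omega) le_rfl (by rw [hQn]; exact hadj.symm)
              · intro h3
                rw [h3]
                have := hQadj (n - 1) (by omega)
                have hn1 : n - 1 + 1 = n := by omega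
                rw [hn1, hQn] at this
                exact this.symm
            rw [key]
            omega
          · have key : ¬ G.Adj (P.getVert a) (Q.getVert (p - b)) :=
              hnoedge a (p - b) hapos ham' h1 h2
            constructor
            · intro hadj; exact absurd hadj key
            · intro hcon; exfalso; omega
      · rw [hgQ a ham, hgQ b hbm]
        have h2 : p - a < n := by omega
        constructor
        · intro hadj
          by_contra hcon
          push_neg at hcon
          rcases Nat.lt_or_ge (p - b + 1) (p - a) with h | h
          · exact Qchord (p - b) (p - a) h (by omega) hadj.symm
          · omega
        · rintro (rfl | ⟨rfl, hb1⟩)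
          · have heq : p - a = (p - (a + 1)) + 1 := by omega
            rw [heq]
            exact (hQadj (p - (a + 1)) (by omega)).symm
          · exfalso; omega
  -- full symmetric characterization
  have Gadj : ∀ a b, a < p → b < p →
      (G.Adj (g a) (g b) ↔
        (b = a + 1 ∨ a = b + 1 ∨ (a = 0 ∧ b = p - 1) ∨ (b = 0 ∧ a = p - 1))) := by
    intro a b hap hbp
    rcases lt_trichotomy a b with h | rfl | h
    · rw [Ghelp a b h hbp]
      constructor <;> intro h1 <;> omega
    · constructor
      · intro hadj; exact absurd hadj (G.irrefl)
      · intro h1; exfalso; omega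
    · rw [adj_comm, Ghelp b a h hap]
      constructor <;> intro h1 <;> omega
  -- translate `j = i + 1` in ZMod p
  have key : ∀ i j : ZMod p, j = i + 1 ↔
      (j.val = i.val + 1 ∨ (i.val = p - 1 ∧ j.val = 0)) := by
    intro i j
    have hiv := ZMod.val_lt i
    have hjv := ZMod.val_lt j
    constructor
    · rintro rfl
      rw [ZMod.val_add, ZMod.val_one]
      by_cases h : i.val + 1 = p
      · right; rw [h, Nat.mod_self]; omega
      · left; rw [Nat.mod_eq_of_lt (by omega)]
    · intro h
      apply ZMod.val_injective
      rw [ZMod.val_add, ZMod.val_one]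
      rcases h with h | ⟨h1, h2⟩
      · rw [Nat.mod_eq_of_lt (by omega), h]
      · rw [h2, h1]
        have : p - 1 + 1 = p := by omega
        rw [this, Nat.mod_self]
  refine ⟨fun i => g i.val, ?_, ?_⟩
  · intro i j hij
    apply ZMod.val_injective
    rcases lt_trichotomy i.val j.val with h | h | h
    · exact absurd hij (Ginj _ _ h (ZMod.val_lt j))
    · exact h
    · exact absurd hij.symm (Ginj _ _ h (ZMod.val_lt i))
  · intro i j
    rw [Gadj i.val j.val (ZMod.val_lt i) (ZMod.val_lt j), key i j, key j i]
    constructor <;> intro h1 <;> omega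

end PEO2

namespace PEO3
open SimpleGraph
variable {V : Type*} {G : SimpleGraph V}

def Avoid (G : SimpleGraph V) (S : Set V) (u v : V) : Prop :=
  ∃ w : G.Walk u v, ∀ x ∈ w.support, x ∉ S

lemma Avoid.left_not_mem {S : Set V} {u v : V} (h : Avoid G S u v) : u ∉ S := by
  obtain ⟨w, hw⟩ := h
  exact hw u w.start_mem_support

lemma Avoid.right_not_mem {S : Set V} {u v : V} (h : Avoid G S u v) : v ∉ S := by
  obtain ⟨w, hw⟩ := h
  exact hw v w.end_mem_support

lemma avoid_refl {S : Set V} {u : V} (h : u ∉ S) : Avoid G S u u :=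
  ⟨Walk.nil, by simpa using h⟩

lemma Avoid.symm {S : Set V} {u v : V} (h : Avoid G S u v) : Avoid G S v u := by
  obtain ⟨w, hw⟩ := h
  exact ⟨w.reverse, by simpa using hw⟩

lemma Avoid.trans {S : Set V} {u v x : V} (h : Avoid G S u v) (h' : Avoid G S v x) :
    Avoid G S u x := by
  obtain ⟨w, hw⟩ := h
  obtain ⟨w', hw'⟩ := h'
  refine ⟨w.append w', fun z hz => ?_⟩
  rw [Walk.mem_support_append_iff] at hz
  rcases hz with hz | hz
  · exact hw z hz
  · exact hw' z hz

lemma avoid_of_adj {S : Set V} {u v : V} (h : G.Adj u v) (hu : u ∉ S) (hv : v ∉ S) :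
    Avoid G S u v :=
  ⟨Walk.cons h Walk.nil, by
    intro x hx
    simp only [Walk.support_cons, Walk.support_nil, List.mem_cons,
      List.not_mem_nil, or_false] at hx
    rcases hx with rfl | rfl
    · exact hu
    · exact hv⟩

lemma avoid_of_support {S : Set V} {x y : V} (w : G.Walk x y)
    (hw : ∀ z ∈ w.support, z ∉ S) {u : V} (hu : u ∈ w.support) : Avoid G S x u := by
  classical
  exact ⟨w.takeUntil u hu, fun z hz => hw z (w.support_takeUntil_subset hu hz)⟩

/-- If there is a walk from `u` to `b` avoiding `S \ {s}`, then either there is one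
avoiding all of `S`, or some vertex reachable from `u` avoiding `S` is adjacent to `s`. -/
lemma walk_reach {S : Finset V} {s : V} [DecidableEq V] :
    ∀ {u b : V} (w : G.Walk u b), (∀ x ∈ w.support, x ∉ (↑(S.erase s) : Set V)) →
      u ∉ (↑S : Set V) →
      Avoid G ↑S u b ∨ ∃ x, Avoid G ↑S u x ∧ G.Adj x s := by
  intro u b w
  induction w with
  | nil => intro _ hu; exact Or.inl (avoid_refl hu)
  | @cons u c b h w ih =>
    intro hsup hu
    by_cases hcs : c = s
    · exact Or.inr ⟨u, avoid_refl hu, hcs ▸ h⟩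
    · have hc : c ∉ (↑S : Set V) := by
        intro hcS
        have : c ∈ (↑(S.erase s) : Set V) := by
          simp only [Finset.coe_erase, Set.mem_diff, Set.mem_singleton_iff]
          exact ⟨hcS, hcs⟩
        exact hsup c (by simp [Walk.support_cons]) this
      have hsup' : ∀ x ∈ w.support, x ∉ (↑(S.erase s) : Set V) := fun x hx =>
        hsup x (by simp [Walk.support_cons, hx])
      rcases ih hsup' hc with h1 | ⟨x, hx1, hx2⟩
      · exact Or.inl ((avoid_of_adj h hu hc).trans h1)
      · exact Or.inr ⟨x, (avoid_of_adj h hu hc).trans hx1, hx2⟩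

lemma walk_in_pair {a b : V} (hab : a ≠ b) (w : G.Walk a b)
    (h : ∀ x ∈ w.support, x = a ∨ x = b) : G.Adj a b := by
  cases w with
  | nil => exact absurd rfl hab
  | @cons _ c _ h' w' =>
    rcases h c (by simp [Walk.support_cons, w'.start_mem_support]) with rfl | rfl
    · exact absurd h' (G.irrefl)
    · exact h'

end PEO3


namespace PEOaux
open SimpleGraph
variable {V : Type*} {G : SimpleGraph V}

def Simplicial (G : SimpleGraph V) (v : V) : Prop :=
  ∀ x y, G.Adj v x → G.Adj v y → x ≠ y → G.Adj x y

lemma chordal_comap (h : G.Chordal) (C : Set V) :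
    (G.comap ((↑) : C → V)).Chordal := by
  rintro p hp ⟨f, finj, fadj⟩
  refine h p hp ⟨fun i => ↑(f i), Subtype.val_injective.comp finj, fun i j => ?_⟩
  rw [← fadj i j]
  rfl

end PEOaux

namespace PEOaux
open SimpleGraph PEO3

universe u

lemma side {N : ℕ}
    (IH : ∀ (W : Type u) [Fintype W] (G : SimpleGraph W), Fintype.card W ≤ N → G.Chordal →
      (∀ a b : W, a ≠ b → G.Adj a b) ∨
        ∃ a b : W, a ≠ b ∧ ¬ G.Adj a b ∧ Simplicial G a ∧ Simplicial G b)
    {W : Type u} [Fintype W] {G : SimpleGraph W} (hG : G.Chordal)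
    (hcard : Fintype.card W ≤ N + 1)
    {S : Finset W} (hScl : ∀ s ∈ S, ∀ t ∈ S, s ≠ t → G.Adj s t)
    {c e : W} (hc : c ∉ (↑S : Set W)) (he : e ∉ (↑S : Set W))
    (hce : ¬ Avoid G ↑S c e) :
    ∃ z, Avoid G ↑S c z ∧ Simplicial G z := by
  classical
  set A : Set W := {x | Avoid G ↑S c x} with hA
  set C : Set W := A ∪ ↑S with hC
  have closure : ∀ {x y : W}, x ∈ A → G.Adj x y → y ∉ (↑S : Set W) → y ∈ A := by
    intro x y hx hxy hy
    exact Avoid.trans hx (avoid_of_adj hxy (Avoid.right_not_mem hx) hy)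
  have heC : e ∉ C := by
    intro h
    rcases h with h | h
    · exact hce h
    · exact he h
  have hcardC : Fintype.card ↥C ≤ N := by
    have h1 : Fintype.card ↥C < Fintype.card W :=
      Fintype.card_lt_of_injective_of_notMem _ Subtype.val_injective
        (b := e)
        (fun hr => heC (by obtain ⟨z, hz⟩ := hr; rw [← hz]; exact z.2))
    omega
  have hcA : c ∈ A := avoid_refl hc
  set GC : SimpleGraph ↥C := G.comap ((↑) : C → W) with hGC
  have transfer : ∀ (z : ↥C), (z : W) ∈ A → Simplicial GC z → Simplicial G (z : W) := by
    intro z hzA hz x y hzx hzy hxy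
    have hxC : x ∈ C := by
      by_cases hxS : x ∈ (↑S : Set W)
      · exact Or.inr hxS
      · exact Or.inl (closure hzA hzx hxS)
    have hyC : y ∈ C := by
      by_cases hyS : y ∈ (↑S : Set W)
      · exact Or.inr hyS
      · exact Or.inl (closure hzA hzy hyS)
    have := hz ⟨x, hxC⟩ ⟨y, hyC⟩ hzx hzy (fun hcon => hxy (congrArg Subtype.val hcon))
    exact this
  rcases IH ↥C GC hcardC (chordal_comap hG C) with hcomp | ⟨x, y, hxy, hnadj, hx, hy⟩
  · refine ⟨c, hcA, transfer ⟨c, Or.inl hcA⟩ hcA ?_⟩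
    intro x y _ _ hxy
    exact hcomp x y hxy
  · by_cases hxA : (x : W) ∈ A
    · exact ⟨x, hxA, transfer x hxA hx⟩
    · by_cases hyA : (y : W) ∈ A
      · exact ⟨y, hyA, transfer y hyA hy⟩
      · exfalso
        have hxS : (x : W) ∈ S := by
          rcases x.2 with h | h
          · exact absurd h hxA
          · exact h
        have hyS : (y : W) ∈ S := by
          rcases y.2 with h | h
          · exact absurd h hyA
          · exact h
        have hvne : (x : W) ≠ (y : W) := fun h => hxy (Subtype.ext h)
        exact hnadj (hScl _ hxS _ hyS hvne)

end PEOaux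

namespace PEOaux
open SimpleGraph PEO3

lemma dirac : ∀ (N : ℕ) (W : Type u) [Fintype W] (G : SimpleGraph W),
    Fintype.card W ≤ N → G.Chordal →
    (∀ a b : W, a ≠ b → G.Adj a b) ∨
      ∃ a b : W, a ≠ b ∧ ¬ G.Adj a b ∧ Simplicial G a ∧ Simplicial G b := by
  intro N
  induction N with
  | zero =>
    intro W _ G hcard _
    left
    intro a b _
    have : 0 < Fintype.card W := Fintype.card_pos_iff.2 ⟨a⟩
    omega
  | succ N IH =>
    intro W _ G hcard hG
    classical
    by_cases hcomp : ∀ a b : W, a ≠ b → G.Adj a b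
    · exact Or.inl hcomp
    right
    push_neg at hcomp
    obtain ⟨a, b, hab, hnadj⟩ := hcomp
    -- the family of separators
    have hS0 : a ∉ (↑(Finset.univ \ ({a, b} : Finset W)) : Set W) ∧
        b ∉ (↑(Finset.univ \ ({a, b} : Finset W)) : Set W) ∧
        ¬ Avoid G ↑(Finset.univ \ ({a, b} : Finset W)) a b := by
      refine ⟨by simp, by simp, ?_⟩
      rintro ⟨w, hw⟩
      refine hnadj (walk_in_pair hab w ?_)
      intro x hx
      have := hw x hx
      simp only [Finset.coe_sdiff, Finset.coe_univ, Set.mem_diff, Set.mem_univ,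
        true_and, not_not] at this
      simpa using this
    set Seps : Finset (Finset W) := Finset.univ.filter
      (fun S => a ∉ (↑S : Set W) ∧ b ∉ (↑S : Set W) ∧ ¬ Avoid G ↑S a b) with hSeps
    have hne : Seps.Nonempty :=
      ⟨Finset.univ \ ({a, b} : Finset W), by
        rw [hSeps, Finset.mem_filter]; exact ⟨Finset.mem_univ _, hS0⟩⟩
    obtain ⟨S, hSmem, hSmin⟩ := Finset.exists_min_image Seps Finset.card hne
    rw [hSeps, Finset.mem_filter] at hSmem
    obtain ⟨-, haS, hbS, hsep⟩ := hSmem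
    -- every separator vertex has neighbours on both sides
    have hnbr : ∀ (c e : W), c ∉ (↑S : Set W) → e ∉ (↑S : Set W) →
        ¬ Avoid G ↑S c e → (∃ w : G.Walk c e, ∀ x ∈ w.support, x ∉ (↑S : Set W) → True) →
        True := fun _ _ _ _ _ _ => trivial
    have hnbrA : ∀ s ∈ S, ∃ x, Avoid G ↑S a x ∧ G.Adj s x := by
      intro s hs
      have hcard' : 0 < S.card := Finset.card_pos.2 ⟨s, hs⟩
      have hns : ¬ (a ∉ (↑(S.erase s) : Set W) ∧ b ∉ (↑(S.erase s) : Set W) ∧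
          ¬ Avoid G ↑(S.erase s) a b) := by
        intro hsep'
        have hmem : S.erase s ∈ Seps := by
          rw [hSeps, Finset.mem_filter]; exact ⟨Finset.mem_univ _, hsep'⟩
        have h1 := hSmin (S.erase s) hmem
        have h2 := Finset.card_erase_of_mem hs
        omega
      have haE : a ∉ (↑(S.erase s) : Set W) := by
        intro h; exact haS (Finset.mem_coe.2 (Finset.mem_of_mem_erase (Finset.mem_coe.1 h)))
      have hbE : b ∉ (↑(S.erase s) : Set W) := by
        intro h; exact hbS (Finset.mem_coe.2 (Finset.mem_of_mem_erase (Finset.mem_coe.1 h)))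
      have hav : Avoid G ↑(S.erase s) a b := by
        by_contra hcon
        exact hns ⟨haE, hbE, hcon⟩
      obtain ⟨w, hw⟩ := hav
      rcases walk_reach w hw haS with h | ⟨x, hx1, hx2⟩
      · exact absurd h hsep
      · exact ⟨x, hx1, hx2.symm⟩
    have hnbrB : ∀ s ∈ S, ∃ x, Avoid G ↑S b x ∧ G.Adj s x := by
      intro s hs
      have hcard' : 0 < S.card := Finset.card_pos.2 ⟨s, hs⟩
      have hns : ¬ (a ∉ (↑(S.erase s) : Set W) ∧ b ∉ (↑(S.erase s) : Set W) ∧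
          ¬ Avoid G ↑(S.erase s) a b) := by
        intro hsep'
        have hmem : S.erase s ∈ Seps := by
          rw [hSeps, Finset.mem_filter]; exact ⟨Finset.mem_univ _, hsep'⟩
        have h1 := hSmin (S.erase s) hmem
        have h2 := Finset.card_erase_of_mem hs
        omega
      have haE : a ∉ (↑(S.erase s) : Set W) := by
        intro h; exact haS (Finset.mem_coe.2 (Finset.mem_of_mem_erase (Finset.mem_coe.1 h)))
      have hbE : b ∉ (↑(S.erase s) : Set W) := by
        intro h; exact hbS (Finset.mem_coe.2 (Finset.mem_of_mem_erase (Finset.mem_coe.1 h)))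
      have hav : Avoid G ↑(S.erase s) a b := by
        by_contra hcon
        exact hns ⟨haE, hbE, hcon⟩
      obtain ⟨w, hw⟩ := hav
      rcases walk_reach w.reverse (by simpa using hw) hbS with h | ⟨x, hx1, hx2⟩
      · exact absurd h.symm hsep
      · exact ⟨x, hx1, hx2.symm⟩
    -- the separator is a clique
    have hScl : ∀ s ∈ S, ∀ t ∈ S, s ≠ t → G.Adj s t := by
      intro s hs t ht hst
      by_contra hna
      obtain ⟨x, hxA, hsx⟩ := hnbrA s hs
      obtain ⟨y, hyA, hty⟩ := hnbrA t ht
      obtain ⟨x', hxB, hsx'⟩ := hnbrB s hs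
      obtain ⟨y', hyB, hty'⟩ := hnbrB t ht
      -- a walk from s to t whose interior lies in the a-side
      obtain ⟨w0, h0⟩ := Avoid.trans hxA.symm hyA
      have hP0 : ∀ z ∈ (Walk.cons hsx (w0.append (Walk.cons hty.symm Walk.nil))).support,
          z = s ∨ z = t ∨ Avoid G ↑S a z := by
        intro z hz
        rw [Walk.support_cons, List.mem_cons] at hz
        rcases hz with rfl | hz
        · exact Or.inl rfl
        rw [Walk.mem_support_append_iff] at hz
        rcases hz with hz | hz
        · exact Or.inr (Or.inr (hxA.trans (avoid_of_support w0 h0 hz)))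
        · rw [Walk.support_cons, List.mem_cons] at hz
          rcases hz with rfl | hz
          · exact Or.inr (Or.inr hyA)
          · simp only [Walk.support_nil, List.mem_singleton] at hz
            exact Or.inr (Or.inl hz)
      obtain ⟨wP, hPsup, Pinj, Pchord⟩ := PEO2.exists_min_walk
        (G := G) (s := s) (t := t) {z | z = s ∨ z = t ∨ Avoid G ↑S a z}
        ⟨_, hP0⟩
      obtain ⟨w1, h1⟩ := Avoid.trans hxB.symm hyB
      have hQ0 : ∀ z ∈ (Walk.cons hsx' (w1.append (Walk.cons hty'.symm Walk.nil))).support,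
          z = s ∨ z = t ∨ Avoid G ↑S b z := by
        intro z hz
        rw [Walk.support_cons, List.mem_cons] at hz
        rcases hz with rfl | hz
        · exact Or.inl rfl
        rw [Walk.mem_support_append_iff] at hz
        rcases hz with hz | hz
        · exact Or.inr (Or.inr (hxB.trans (avoid_of_support w1 h1 hz)))
        · rw [Walk.support_cons, List.mem_cons] at hz
          rcases hz with rfl | hz
          · exact Or.inr (Or.inr hyB)
          · simp only [Walk.support_nil, List.mem_singleton] at hz
            exact Or.inr (Or.inl hz)
      obtain ⟨wQ, hQsup, Qinj, Qchord⟩ := PEO2.exists_min_walk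
        (G := G) (s := s) (t := t) {z | z = s ∨ z = t ∨ Avoid G ↑S b z}
        ⟨_, hQ0⟩
      -- lengths are at least 2
      have hPlen : 2 ≤ wP.length := by
        by_contra hlen
        push_neg at hlen
        interval_cases h : wP.length
        · exact hst (Walk.eq_of_length_eq_zero h)
        · have := wP.adj_getVert_succ (i := 0) (by omega)
          rw [wP.getVert_zero] at this
          have h2 : wP.getVert 1 = t := by
            have := wP.getVert_length
            rwa [h] at this
          rw [h2] at this
          exact hna this
      have hQlen : 2 ≤ wQ.length := by
        by_contra hlen
        push_neg at hlen
        interval_cases h : wQ.length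
        · exact hst (Walk.eq_of_length_eq_zero h)
        · have := wQ.adj_getVert_succ (i := 0) (by omega)
          rw [wQ.getVert_zero] at this
          have h2 : wQ.getVert 1 = t := by
            have := wQ.getVert_length
            rwa [h] at this
          rw [h2] at this
          exact hna this
      -- interiors
      have hPint : ∀ i, 0 < i → i < wP.length → Avoid G ↑S a (wP.getVert i) := by
        intro i h0 hi
        have hmem := hPsup (wP.getVert i)
          (Walk.mem_support_iff_exists_getVert.2 ⟨i, rfl, by omega⟩)
        rcases hmem with h | h | h
        · exfalso
          apply Pinj 0 i h0 (by omega)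
          rw [wP.getVert_zero, h]
        · exfalso
          apply Pinj i wP.length hi le_rfl
          rw [wP.getVert_length, h]
        · exact h
      have hQint : ∀ i, 0 < i → i < wQ.length → Avoid G ↑S b (wQ.getVert i) := by
        intro i h0 hi
        have hmem := hQsup (wQ.getVert i)
          (Walk.mem_support_iff_exists_getVert.2 ⟨i, rfl, by omega⟩)
        rcases hmem with h | h | h
        · exfalso
          apply Qinj 0 i h0 (by omega)
          rw [wQ.getVert_zero, h]
        · exfalso
          apply Qinj i wQ.length hi le_rfl
          rw [wQ.getVert_length, h]
        · exact h
      have hdisj : ∀ i j, 0 < i → i < wP.length → 0 < j → j < wQ.length →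
          wP.getVert i ≠ wQ.getVert j := by
        intro i j hi0 him hj0 hjn heq
        exact hsep ((hPint i hi0 him).trans (heq ▸ (hQint j hj0 hjn)).symm)
      have hnoedge : ∀ i j, 0 < i → i < wP.length → 0 < j → j < wQ.length →
          ¬ G.Adj (wP.getVert i) (wQ.getVert j) := by
        intro i j hi0 him hj0 hjn hadj
        have h1 := hPint i hi0 him
        have h2 := hQint j hj0 hjn
        have h3 : Avoid G ↑S a (wQ.getVert j) :=
          h1.trans (avoid_of_adj hadj h1.right_not_mem h2.right_not_mem)
        exact hsep (h3.trans h2.symm)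
      exact hG (wP.length + wQ.length) (by omega)
        (PEO2.cycle_of_two_paths hna wP wQ rfl rfl hPlen hQlen Pinj Pchord Qinj Qchord
          hdisj hnoedge)
    -- apply `side` on both sides
    obtain ⟨zA, hzA, hzAs⟩ := side IH hG hcard hScl haS hbS hsep
    obtain ⟨zB, hzB, hzBs⟩ := side IH hG hcard hScl hbS haS (fun h => hsep h.symm)
    refine ⟨zA, zB, ?_, ?_, hzAs, hzBs⟩
    · rintro rfl
      exact hsep (hzA.trans hzB.symm)
    · intro hadj
      have h3 : Avoid G ↑S a zB :=
        hzA.trans (avoid_of_adj hadj hzA.right_not_mem hzB.right_not_mem)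
      exact hsep (h3.trans hzB.symm)

end PEOaux

namespace PEOaux
open SimpleGraph

lemma peo : ∀ (N : ℕ) (W : Type u) [Fintype W] (G : SimpleGraph W), Fintype.card W ≤ N →
    G.Chordal → ∃ f : W → ℕ, Function.Injective f ∧ (∀ v, f v < Fintype.card W) ∧
      ∀ v x y, G.Adj v x → f x < f v → G.Adj v y → f y < f v → x ≠ y → G.Adj x y := by
  intro N
  induction N with
  | zero =>
    intro W _ G hcard _
    have hW : IsEmpty W := by
      rw [← Fintype.card_eq_zero_iff]
      omega
    exact ⟨fun v => 0, fun v => (hW.elim v), fun v => (hW.elim v), fun v => (hW.elim v)⟩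
  | succ N IH =>
    intro W _ G hcard hG
    classical
    rcases isEmpty_or_nonempty W with hW | hW
    · exact ⟨fun v => 0, fun v => (hW.elim v), fun v => (hW.elim v), fun v => (hW.elim v)⟩
    obtain ⟨v, hv⟩ : ∃ v : W, Simplicial G v := by
      rcases dirac (Fintype.card W) W G le_rfl hG with hcomp | ⟨a, _, _, _, ha, _⟩
      · obtain ⟨v⟩ := hW
        exact ⟨v, fun x y _ _ hxy => hcomp x y hxy⟩
      · exact ⟨a, ha⟩
    set C : Set W := {u | u ≠ v} with hCdef
    set GC : SimpleGraph ↥C := G.comap ((↑) : C → W) with hGC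
    have h1 : Fintype.card ↥C < Fintype.card W :=
      Fintype.card_lt_of_injective_of_notMem _ Subtype.val_injective
        (b := v) (fun hr => by obtain ⟨z, hz⟩ := hr; exact z.2 hz)
    obtain ⟨f', hinj', hbound', helim'⟩ := IH ↥C GC (by omega) (chordal_comap hG C)
    have hcw : 1 ≤ Fintype.card W := Fintype.card_pos_iff.2 hW
    have hlt : ∀ (z : ↥C), f' z < Fintype.card W - 1 := by
      intro z
      have := hbound' z
      omega
    refine ⟨fun u => if h : u = v then Fintype.card W - 1 else f' ⟨u, h⟩, ?_, ?_, ?_⟩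
    · intro u1 u2 heq
      beta_reduce at heq
      by_cases h1' : u1 = v
      · by_cases h2' : u2 = v
        · rw [h1', h2']
        · rw [dif_pos h1', dif_neg h2'] at heq
          exact absurd heq (by have := hlt ⟨u2, h2'⟩; omega)
      · by_cases h2' : u2 = v
        · rw [dif_neg h1', dif_pos h2'] at heq
          exact absurd heq (by have := hlt ⟨u1, h1'⟩; omega)
        · rw [dif_neg h1', dif_neg h2'] at heq
          exact congrArg Subtype.val (hinj' heq)
    · intro u
      beta_reduce
      by_cases h : u = v
      · rw [dif_pos h]; omega
      · rw [dif_neg h]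
        have := hbound' ⟨u, h⟩
        omega
    · intro u x y hux hfx huy hfy hxy
      beta_reduce at hfx hfy
      by_cases h : u = v
      · subst h
        exact hv x y hux huy hxy
      · have hxv : x ≠ v := by
          intro hx
          rw [dif_pos hx, dif_neg h] at hfx
          have := hlt ⟨u, h⟩
          omega
        have hyv : y ≠ v := by
          intro hy
          rw [dif_pos hy, dif_neg h] at hfy
          have := hlt ⟨u, h⟩
          omega
        rw [dif_neg h, dif_neg hxv] at hfx
        rw [dif_neg h, dif_neg hyv] at hfy
        exact helim' ⟨u, h⟩ ⟨x, hxv⟩ ⟨y, hyv⟩ hux hfx huy hfy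
          (fun hc => hxy (congrArg Subtype.val hc))

end PEOaux

/-- Every finite chordal graph admits a perfect elimination ordering: an
injective numbering of the vertices such that for each vertex `v` the earlier
neighbours of `v` form a clique. -/
theorem chordal_exists_perfect_elimination_order {V : Type*} [Fintype V]
    (G : SimpleGraph V) (h : G.Chordal) :
    ∃ f : V → ℕ, Function.Injective f ∧
      ∀ v : V, G.IsClique {u : V | G.Adj v u ∧ f u < f v} := by
  obtain ⟨f, hinj, _, helim⟩ := PEOaux.peo (Fintype.card V) V G le_rfl h
  refine ⟨f, hinj, ?_⟩
  intro v
  rw [SimpleGraph.isClique_iff]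
  intro x hx y hy hxy
  exact helim v x y hx.1 hx.2 hy.1 hy.2 hxy
end
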